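/- Under the SETUP, for every w ∈ S^⊥ and every w* ∈ S^⊥ with D(w*) = D*: −‖w*‖ · ‖P_{S^⊥}(x̃(w))‖ ≤ F(x̃(w)) − F* ≤ ‖w‖ · ‖P_{S^⊥}(x̃(w))‖. -/

import Mathlib

noncomputable section

open scoped BigOperators

abbrev Evec (d : ℕ) := EuclideanSpace ℝ (Fin d)
abbrev ENvec (n d : ℕ) := PiLp 2 (fun _ : Fin n => EuclideanSpace ℝ (Fin d))

/-- Real inner product on `ℝ^d`. -/
def ip {d : ℕ} (x y : Evec d) : ℝ := inner ℝ x y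

/-- Real inner product on `ℝ^{nd}`. -/
def ipN {n d : ℕ} (x y : ENvec n d) : ℝ := inner ℝ x y

/-- `g` is a subgradient of `f` at `x`. -/
def IsSubgradientAt {d : ℕ} (f : Evec d → ℝ) (g x : Evec d) : Prop :=
  ∀ y, f x + ip g (y - x) ≤ f y

/-- `f` is strongly convex on `X` with parameter `θ`. -/
def StrongConvexOnWith {d : ℕ} (X : Set (Evec d)) (θ : ℝ) (f : Evec d → ℝ) : Prop :=
  ∀ x ∈ X, ∀ y ∈ X, ∀ g, IsSubgradientAt f g x →
    θ / 2 * ‖y - x‖ ^ 2 ≤ f y - f x - ip g (y - x)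

structure Setup (n d : ℕ) : Type where
  hn : 2 ≤ n
  hd : 1 ≤ d
  X : Fin n → Set (Evec d)
  f : Fin n → Evec d → ℝ
  θ : Fin n → ℝ
  hθ : ∀ i, 0 < θ i
  hXne : ∀ i, (X i).Nonempty
  hXclosed : ∀ i, IsClosed (X i)
  hXconv : ∀ i, Convex ℝ (X i)
  hfconv : ∀ i, ConvexOn ℝ Set.univ (f i)
  hstrong : ∀ i, StrongConvexOnWith (X i) (θ i) (f i)
  hzero : (0 : Evec d) ∈ interior (⋂ i, X i)
  xt : Fin n → Evec d → Evec d
  hxt_mem : ∀ i w, xt i w ∈ X i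
  hxt_max : ∀ i w, ∀ x ∈ X i, ip w x - f i x ≤ ip w (xt i w) - f i (xt i w)
  hxt_uniq : ∀ i w x, x ∈ X i →
    ip w x - f i x = ip w (xt i w) - f i (xt i w) → x = xt i w
  xstar : Evec d
  hxstar_mem : xstar ∈ ⋂ i, X i
  hxstar_min : ∀ x ∈ ⋂ i, X i, (∑ i, f i xstar) ≤ ∑ i, f i x

namespace Setup

variable {n d : ℕ} (P : Setup n d)

/-- Lipschitz constants `L_i = 1/θ_i`. -/
def Lip (i : Fin n) : ℝ := 1 / P.θ i

/-- `L = max_i L_i`. -/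
def Lmax : ℝ := ⨆ i, P.Lip i

/-- The conjugate function `d_i`. -/
def dconj (i : Fin n) (w : Evec d) : ℝ := ip w (P.xt i w) - P.f i (P.xt i w)

/-- The Fenchel dual function `D`. -/
def D (w : ENvec n d) : ℝ := ∑ i, P.dconj i (w i)

/-- The map `x̃ = ∇D`. -/
def xtv (w : ENvec n d) : ENvec n d := WithLp.toLp 2 (fun i => P.xt i (w i))

/-- The primal objective `F`. -/
def Fobj (x : ENvec n d) : ℝ := ∑ i, P.f i (x i)

/-- The optimal primal value. -/
def Fstar : ℝ := ∑ i, P.f i P.xstar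

/-- The primal optimum `𝐱* = (x*, …, x*)`. -/
def xstarv : ENvec n d := WithLp.toLp 2 (fun _ => P.xstar)

end Setup

/-- The subspace `S^⊥ = {w : w_1 + ⋯ + w_n = 0}`. -/
def Sperp (n d : ℕ) : Submodule ℝ (ENvec n d) where
  carrier := {w | ∑ i, w i = 0}
  add_mem' := by
    intro a b ha hb
    simp only [Set.mem_setOf_eq] at ha hb ⊢
    calc ∑ i, (a + b) i = ∑ i, (a i + b i) := rfl
    _ = (∑ i, a i) + ∑ i, b i := Finset.sum_add_distrib
    _ = 0 := by rw [ha, hb, add_zero]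
  zero_mem' := by
    simp only [Set.mem_setOf_eq]
    calc ∑ i, (0 : ENvec n d) i = ∑ _i : Fin n, (0 : Evec d) := rfl
    _ = 0 := by simp
  smul_mem' := by
    intro c a ha
    simp only [Set.mem_setOf_eq] at ha ⊢
    calc ∑ i, (c • a) i = ∑ i, c • a i := rfl
    _ = c • ∑ i, a i := Finset.smul_sum.symm
    _ = 0 := by rw [ha, smul_zero]

/-- Orthogonal projection onto `S^⊥`. -/
def projSperp {n d : ℕ} (x : ENvec n d) : ENvec n d :=
  (Submodule.orthogonalProjectionOnto (Sperp n d) x : ENvec n d)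

namespace Setup

variable {n d : ℕ} (P : Setup n d)

/-- The optimal dual value `D* = min_{w ∈ S^⊥} D(w)`. -/
def Dstar : ℝ := sInf (P.D '' (Sperp n d : Set (ENvec n d)))

end Setup

/-- Block action of `H ⊗ I_d` on `ℝ^{nd}`. -/
def blockMul {n d : ℕ} (H : Matrix (Fin n) (Fin n) ℝ) (w : ENvec n d) : ENvec n d :=
  WithLp.toLp 2 (fun i => ∑ j, H i j • w j)

/-- A time-varying sequence of weighted undirected graphs. -/
structure GraphSeq (n : ℕ) : Type where
  adj : ℕ → Fin n → Fin n → Bool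
  adj_symm : ∀ k i j, adj k i j = adj k j i
  adj_irrefl : ∀ k i, adj k i i = false
  adj_ne : ∀ k, ∃ i j, adj k i j = true
  h : ℕ → Fin n → Fin n → ℝ
  h_symm : ∀ k i j, h k i j = h k j i
  hlow : ℝ
  hhigh : ℝ
  hlow_pos : 0 < hlow
  h_mem : ∀ k i j, adj k i j = true → h k i j ∈ Set.Icc hlow hhigh

namespace GraphSeq

variable {n : ℕ} (Gs : GraphSeq n)

/-- The weight matrix `H_{G^k}`. -/
def H (k : ℕ) : Matrix (Fin n) (Fin n) ℝ :=
  Matrix.of fun i j =>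
    if i = j then ∑ l, (if Gs.adj k i l = true then Gs.h k i l else 0)
    else if Gs.adj k i j = true then -(Gs.h k i j) else 0

end GraphSeq

/-- The Fenchel dual gradient algorithm: step sizes, iterates, and their defining relations. -/
structure Algo (n d : ℕ) (P : Setup n d) (Gs : GraphSeq n) : Type where
  δ : ℝ
  hδ_pos : 0 < δ
  hδ : ∀ k, (δ • Matrix.diagonal (fun i => (P.Lip i)⁻¹) - Gs.H k).PosSemidef
  αlo : ℝ
  αhi : ℝ
  hαlo : 0 < αlo
  hαhi : αhi < 2 / δ
  α : ℕ → ℝ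
  hα : ∀ k, α k ∈ Set.Icc αlo αhi
  w : ℕ → ENvec n d
  hw0 : w 0 ∈ Sperp n d
  hrec : ∀ k, w (k + 1) = w k - α k • blockMul (Gs.H k) (P.xtv (w k))

namespace Algo

variable {n d : ℕ} {P : Setup n d} {Gs : GraphSeq n} (A : Algo n d P Gs)

/-- Primal iterates `x^k = ∇D(w^k)`. -/
def x (k : ℕ) : ENvec n d := P.xtv (A.w k)

/-- The constant `ρ = min{α̲ − α̲²δ/2, ᾱ − ᾱ²δ/2}`. -/
def ρ : ℝ := min (A.αlo - A.αlo ^ 2 * A.δ / 2) (A.αhi - A.αhi ^ 2 * A.δ / 2)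

end Algo

/-! ### Auxiliary lemmas -/

section Aux

lemma exists_subgrad {d : ℕ} {f : Evec d → ℝ} (hf : ConvexOn ℝ Set.univ f) (x : Evec d) :
    ∃ g, IsSubgradientAt f g x := by
  have hcont : Continuous f := by
    exact continuousOn_univ.mp (hf.continuousOn isOpen_univ)
  set t : Set (Evec d × ℝ) := {p | f p.1 < p.2} with ht_def
  have ht_open : IsOpen t := isOpen_lt (hcont.comp continuous_fst) continuous_snd
  have ht_conv : Convex ℝ t := by
    rintro ⟨a, s⟩ ha ⟨b, r⟩ hb la mu hla hmu hsum
    simp only [ht_def, Set.mem_setOf_eq] at ha hb ⊢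
    have h1 : f (la • a + mu • b) ≤ la * f a + mu * f b :=
      hf.2 trivial trivial hla hmu hsum
    rcases eq_or_lt_of_le hla with h0 | hpos
    · have hmu1 : mu = 1 := by linarith
      simpa [← h0, hmu1] using hb
    · have h2 : la * f a < la * s := mul_lt_mul_of_pos_left ha hpos
      have h3 : mu * f b ≤ mu * r := mul_le_mul_of_nonneg_left hb.le hmu
      calc f (la • a + mu • b) ≤ la * f a + mu * f b := h1
        _ < la * s + mu * r := by linarith
  obtain ⟨ℓ, hℓ⟩ := geometric_hahn_banach_point_open ht_conv ht_open
    (show (x, f x) ∉ t by simp [ht_def])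
  set c : ℝ := ℓ (0, 1) with hc_def
  have hdecomp : ∀ (y : Evec d) (s : ℝ), ℓ (y, s) = ℓ (y, 0) + s * c := by
    intro y s
    have h : (y, s) = (y, (0:ℝ)) + s • ((0:Evec d), (1:ℝ)) := by
      simp [Prod.ext_iff]
    rw [h, map_add, map_smul, smul_eq_mul, hc_def]
  have hc : 0 < c := by
    have h := hℓ (x, f x + 1) (by simp [ht_def])
    rw [hdecomp x (f x + 1), hdecomp x (f x)] at h
    linarith
  have key : ∀ y, ℓ (x,0) + f x * c ≤ ℓ (y,0) + f y * c := by
    intro y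
    have h2 : ∀ ε > (0:ℝ), ℓ (x,0) + f x * c < ℓ (y,0) + (f y + ε) * c := by
      intro ε hε
      have h := hℓ (y, f y + ε) (by simp [ht_def, hε])
      rwa [hdecomp x (f x), hdecomp y (f y + ε)] at h
    by_contra hcon
    push_neg at hcon
    set ε := (ℓ (x,0) + f x * c - (ℓ (y,0) + f y * c)) / c with hε_def
    have hε : 0 < ε := div_pos (by linarith) hc
    have h3 := h2 ε hε
    have h4 : ℓ (y,0) + (f y + ε)*c = ℓ (x,0) + f x * c := by
      field_simp [hε_def]
      rw [hε_def, add_mul, div_mul_cancel₀ _ hc.ne']; ring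
    linarith
  refine ⟨c⁻¹ • ((InnerProductSpace.toDual ℝ (Evec d)).symm
    (-(ℓ.comp (ContinuousLinearMap.inl ℝ (Evec d) ℝ)))), ?_⟩
  intro y
  have hip : ip (c⁻¹ • ((InnerProductSpace.toDual ℝ (Evec d)).symm
      (-(ℓ.comp (ContinuousLinearMap.inl ℝ (Evec d) ℝ))))) (y - x)
      = c⁻¹ * (ℓ (x, 0) - ℓ (y, 0)) := by
    show (inner ℝ _ _ : ℝ) = _
    rw [real_inner_smul_left, InnerProductSpace.toDual_symm_apply]
    have h : ((ℓ.comp (ContinuousLinearMap.inl ℝ (Evec d) ℝ))) (y - x) = ℓ (y,0) - ℓ (x,0) := by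
      rw [map_sub]; rfl
    simp only [ContinuousLinearMap.neg_apply, h]
    ring
  rw [hip]
  have hk := key y
  have h5 : ℓ (x,0) - ℓ (y,0) ≤ (f y - f x) * c := by linarith
  have h6 : c⁻¹ * (ℓ (x,0) - ℓ (y,0)) ≤ f y - f x := by
    rw [inv_mul_eq_div]
    exact (div_le_iff₀ hc).mpr h5
  linarith

variable {n d : ℕ} (P : Setup n d)

/-- Quadratic growth at the constrained maximizer. -/
lemma Setup.growth (i : Fin n) (u : Evec d) {b : Evec d} (hb : b ∈ P.X i) :
    ip u b - P.f i b + P.θ i / 2 * ‖b - P.xt i u‖ ^ 2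
      ≤ ip u (P.xt i u) - P.f i (P.xt i u) := by
  set a := P.xt i u with ha_def
  have ha : a ∈ P.X i := P.hxt_mem i u
  set s := ‖b - a‖ ^ 2 with hs_def
  have key : ∀ l ∈ Set.Ioo (0:ℝ) 1,
      P.θ i / 2 * ((1 - l) * s) ≤ P.f i b - P.f i a - ip u (b - a) := by
    rintro l ⟨hl0, hl1⟩
    set m := (1 - l) • a + l • b with hm_def
    have hm : m ∈ P.X i := P.hXconv i ha hb (by linarith) hl0.le (by ring)
    obtain ⟨g, hg⟩ := exists_subgrad (P.hfconv i) m
    have h1 := P.hstrong i m hm a ha g hg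
    have h2 := P.hstrong i m hm b hb g hg
    have ham : a - m = l • (a - b) := by
      rw [hm_def]; module
    have hbm : b - m = (1 - l) • (b - a) := by
      rw [hm_def]; module
    have e1 : ‖a - m‖ = l * ‖b - a‖ := by
      rw [ham, norm_smul, Real.norm_eq_abs, abs_of_pos hl0, norm_sub_rev]
    have e2 : ‖b - m‖ = (1 - l) * ‖b - a‖ := by
      rw [hbm, norm_smul, Real.norm_eq_abs, abs_of_pos (by linarith : (0:ℝ) < 1 - l)]
    have e3 : ip g (a - m) = -(l * ip g (b - a)) := by
      show (inner ℝ g (a - m) : ℝ) = _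
      rw [ham, real_inner_smul_right]
      show l * (inner ℝ g (a - b) : ℝ) = -(l * (inner ℝ g (b - a) : ℝ))
      rw [← neg_sub b a, inner_neg_right]
      ring
    have e4 : ip g (b - m) = (1 - l) * ip g (b - a) := by
      show (inner ℝ g (b - m) : ℝ) = _
      rw [hbm, real_inner_smul_right]
      rfl
    rw [e1, e3] at h1
    rw [e2, e4] at h2
    have hmax := P.hxt_max i u m hm
    have e6 : ip u m - ip u a = l * ip u (b - a) := by
      show (inner ℝ u m : ℝ) - inner ℝ u a = _
      rw [← inner_sub_right]
      have : m - a = l • (b - a) := by rw [hm_def]; module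
      rw [this, real_inner_smul_right]
      rfl
    have hfm : P.f i a + l * ip u (b - a) ≤ P.f i m := by
      have : ip u m - P.f i m ≤ ip u a - P.f i a := hmax
      linarith
    have H1 := mul_le_mul_of_nonneg_left h1 (by linarith : (0:ℝ) ≤ 1 - l)
    have H2 := mul_le_mul_of_nonneg_left h2 hl0.le
    have H4 : l * (P.θ i / 2 * ((1 - l) * s)) ≤ l * (P.f i b - P.f i a - ip u (b - a)) := by
      rw [hs_def]; nlinarith [H1, H2, hfm]
    exact le_of_mul_le_mul_left H4 hl0
  have hten : Filter.Tendsto (fun l : ℝ => P.θ i / 2 * ((1 - l) * s)) (nhdsWithin 0 (Set.Ioi 0))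
      (nhds (P.θ i / 2 * ((1 - (0:ℝ)) * s))) := by
    apply Filter.Tendsto.mono_left _ nhdsWithin_le_nhds
    exact (Continuous.tendsto (by continuity) 0)
  have hev : ∀ᶠ l in nhdsWithin (0:ℝ) (Set.Ioi 0),
      P.θ i / 2 * ((1 - l) * s) ≤ P.f i b - P.f i a - ip u (b - a) := by
    filter_upwards [Ioo_mem_nhdsGT_of_mem (Set.left_mem_Ico.mpr one_pos)] with l hl
    exact key l hl
  have hfin := le_of_tendsto hten hev
  simp only [sub_zero, one_mul] at hfin
  have e8 : ip u (b - a) = ip u b - ip u a := by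
    show (inner ℝ u (b - a) : ℝ) = _
    rw [inner_sub_right]
    rfl
  linarith

/-- Strong monotonicity of the gradient map. -/
lemma Setup.xt_mono (i : Fin n) (u u' : Evec d) :
    P.θ i * ‖P.xt i u - P.xt i u'‖ ^ 2 ≤ ip (u - u') (P.xt i u - P.xt i u') := by
  have h1 := P.growth i u (P.hxt_mem i u')
  have h2 := P.growth i u' (P.hxt_mem i u)
  set a := P.xt i u
  set b := P.xt i u'
  have e1 : ip u b - ip u a + (ip u' a - ip u' b) = -(ip (u - u') (a - b)) := by
    show (inner ℝ u b : ℝ) - inner ℝ u a + ((inner ℝ u' a : ℝ) - inner ℝ u' b)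
      = -(inner ℝ (u - u') (a - b) : ℝ)
    rw [inner_sub_left, inner_sub_right, inner_sub_right]
    ring
  have e2 : ‖a - b‖ ^ 2 = ‖b - a‖ ^ 2 := by rw [norm_sub_rev]
  rw [show P.xt i u - P.xt i u' = a - b from rfl, e2]
  rw [e2] at h2
  linarith [h1, h2, e1]

/-- Lipschitz continuity of the gradient map. -/
lemma Setup.xt_lip (i : Fin n) (u u' : Evec d) :
    ‖P.xt i u - P.xt i u'‖ ≤ (P.θ i)⁻¹ * ‖u - u'‖ := by
  have hθ := P.hθ i
  have h := P.xt_mono i u u'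
  have hcs : ip (u - u') (P.xt i u - P.xt i u') ≤ ‖u - u'‖ * ‖P.xt i u - P.xt i u'‖ :=
    real_inner_le_norm (u - u') (P.xt i u - P.xt i u')
  set r := ‖P.xt i u - P.xt i u'‖ with hr
  rcases eq_or_lt_of_le (norm_nonneg (P.xt i u - P.xt i u')) with h0 | hpos
  · rw [hr, ← h0]
    positivity
  · have h3 : P.θ i * r * r ≤ ‖u - u'‖ * r := by nlinarith
    have h4 : P.θ i * r ≤ ‖u - u'‖ := le_of_mul_le_mul_right (by nlinarith) hpos
    rw [inv_mul_eq_div, le_div_iff₀ hθ]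
    linarith

end Aux

theorem stmt16 {n d : ℕ} (P : Setup n d) :
    ∀ w ∈ Sperp n d, ∀ wstar ∈ Sperp n d, P.D wstar = P.Dstar →
      -(‖wstar‖ * ‖projSperp (P.xtv w)‖) ≤ P.Fobj (P.xtv w) - P.Fstar ∧
      P.Fobj (P.xtv w) - P.Fstar ≤ ‖w‖ * ‖projSperp (P.xtv w)‖ := by
  classical
  intro w hw wstar hws hD
  set xv : ENvec n d := P.xtv w with hxv
  -- sums of inner ℝ products against a Sperp element and a constant vanish
  have hzero : ∀ u : ENvec n d, u ∈ Sperp n d → ∀ z : Evec d,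
      (∑ i, ip (u i) z) = 0 := by
    intro u hu z
    have husum : (∑ i, u i) = 0 := hu
    have h1 : (∑ i, ip (u i) z) = (inner ℝ (∑ i, u i) z : ℝ) := by
      rw [sum_inner]
      rfl
    rw [h1, husum, inner_zero_left]
  -- projection identity
  have hproj : ∀ u : ENvec n d, u ∈ Sperp n d → ∀ x : ENvec n d,
      (inner ℝ u x : ℝ) = inner ℝ u (projSperp x) := by
    intro u hu x
    have hmem := Submodule.sub_starProjection_mem_orthogonal (K := Sperp n d) x
    have h0 : (inner ℝ u (x - projSperp x) : ℝ) =
        0 := (Submodule.mem_orthogonal (Sperp n d) _).mp hmem u hu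
    rw [inner_sub_right] at h0
    have : (inner ℝ u (projSperp x) : ℝ) = inner ℝ u ((Submodule.orthogonalProjectionOnto (Sperp n d) x : ENvec n d)) := rfl
    linarith [h0, this]
  have hsum_inner : ∀ u x : ENvec n d, (inner ℝ u x : ℝ) = ∑ i, ip (u i) (x i) :=
    fun u x => PiLp.inner_apply u x
  have hxstar_memX : ∀ i, P.xstar ∈ P.X i := fun i => Set.mem_iInter.mp P.hxstar_mem i
  -- upper bound
  have hupper : P.Fobj xv - P.Fstar ≤ ‖w‖ * ‖projSperp xv‖ := by
    have h1 : ∀ i, P.f i (xv i) - P.f i P.xstar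
        ≤ ip (w i) (xv i) - ip (w i) P.xstar := by
      intro i
      have h := P.hxt_max i (w i) P.xstar (hxstar_memX i)
      have : xv i = P.xt i (w i) := rfl
      rw [this]
      linarith [h]
    have hs := Finset.sum_le_sum (fun i (_ : i ∈ Finset.univ) => h1 i)
    rw [Finset.sum_sub_distrib, Finset.sum_sub_distrib, hzero w hw P.xstar] at hs
    have h2 : P.Fobj xv - P.Fstar ≤ ∑ i, ip (w i) (xv i) := by
      have e1 : P.Fobj xv = ∑ i, P.f i (xv i) := rfl
      have e2 : P.Fstar = ∑ i, P.f i P.xstar := rfl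
      rw [e1, e2]
      linarith [hs]
    calc P.Fobj xv - P.Fstar ≤ ∑ i, ip (w i) (xv i) := h2
      _ = inner ℝ w xv := (hsum_inner w xv).symm
      _ = inner ℝ w (projSperp xv) := hproj w hw xv
      _ ≤ ‖w‖ * ‖projSperp xv‖ := real_inner_le_norm _ _
  -- weak duality
  have hweak : ∀ u : ENvec n d, u ∈ Sperp n d → -P.Fstar ≤ P.D u := by
    intro u hu
    have h1 : ∀ i, ip (u i) P.xstar - P.f i P.xstar ≤ P.dconj i (u i) :=
      fun i => P.hxt_max i (u i) P.xstar (hxstar_memX i)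
    have hs := Finset.sum_le_sum (fun i (_ : i ∈ Finset.univ) => h1 i)
    rw [Finset.sum_sub_distrib, hzero u hu P.xstar] at hs
    have e1 : P.D u = ∑ i, P.dconj i (u i) := rfl
    have e2 : P.Fstar = ∑ i, P.f i P.xstar := rfl
    rw [e1, e2]
    linarith [hs]
  -- minimality of wstar
  have hmin : ∀ u ∈ Sperp n d, P.D wstar ≤ P.D u := by
    intro u hu
    rw [hD]
    refine csInf_le ⟨-P.Fstar, ?_⟩ ⟨u, hu, rfl⟩
    rintro y ⟨v, hv, rfl⟩
    exact hweak v hv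
  -- first-order optimality
  have hfo : ∀ v : ENvec n d, v ∈ Sperp n d →
      0 ≤ ∑ i, ip (v i) (P.xt i (wstar i)) := by
    intro v hv
    set C := ∑ i, (P.θ i)⁻¹ * ‖v i‖ ^ 2 with hC
    have hC0 : 0 ≤ C := Finset.sum_nonneg fun i _ => by have := P.hθ i; positivity
    have hstep : ∀ t : ℝ, 0 < t → -(t * C) ≤ ∑ i, ip (v i) (P.xt i (wstar i)) := by
      intro t ht
      set u : ENvec n d := wstar + t • v with hu_def
      have hu_mem : u ∈ Sperp n d := (Sperp n d).add_mem hws ((Sperp n d).smul_mem t hv)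
      have hA : P.D wstar ≤ P.D u := hmin u hu_mem
      have hB : ∀ i, P.dconj i (u i) - t * ip (v i) (P.xt i (u i)) ≤ P.dconj i (wstar i) := by
        intro i
        have h := P.hxt_max i (wstar i) (P.xt i (u i)) (P.hxt_mem i (u i))
        have e : ip (u i) (P.xt i (u i)) =
            ip (wstar i) (P.xt i (u i)) + t * ip (v i) (P.xt i (u i)) := by
          show (inner ℝ (u i) (P.xt i (u i)) : ℝ) = _
          have : u i = wstar i + t • v i := rfl
          rw [this, inner_add_left, real_inner_smul_left]
          rfl
        have e1 : P.dconj i (u i) = ip (u i) (P.xt i (u i)) - P.f i (P.xt i (u i)) := rfl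
        have e2 : P.dconj i (wstar i) =
            ip (wstar i) (P.xt i (wstar i)) - P.f i (P.xt i (wstar i)) := rfl
        rw [e1, e2, e]
        linarith [h]
      have hsumB := Finset.sum_le_sum (fun i (_ : i ∈ Finset.univ) => hB i)
      rw [Finset.sum_sub_distrib, ← Finset.mul_sum] at hsumB
      have hDu : P.D u = ∑ i, P.dconj i (u i) := rfl
      have hDw : P.D wstar = ∑ i, P.dconj i (wstar i) := rfl
      have hpos : 0 ≤ t * ∑ i, ip (v i) (P.xt i (u i)) := by
        rw [hDu, hDw] at hA
        linarith [hsumB, hA]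
      have hS : 0 ≤ ∑ i, ip (v i) (P.xt i (u i)) := by
        by_contra hneg
        push_neg at hneg
        nlinarith [hpos, hneg]
      have hcmp : ∀ i, ip (v i) (P.xt i (u i)) - (P.θ i)⁻¹ * ‖v i‖ ^ 2 * t
          ≤ ip (v i) (P.xt i (wstar i)) := by
        intro i
        have hlip := P.xt_lip i (u i) (wstar i)
        have edif : u i - wstar i = t • v i := by
          show wstar i + t • v i - wstar i = t • v i
          abel
        rw [edif, norm_smul, Real.norm_eq_abs, abs_of_pos ht] at hlip
        have hcs := real_inner_le_norm (v i) (P.xt i (u i) - P.xt i (wstar i))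
        have ei : (inner ℝ (v i) (P.xt i (u i) - P.xt i (wstar i)) : ℝ)
            = ip (v i) (P.xt i (u i)) - ip (v i) (P.xt i (wstar i)) := by
          rw [inner_sub_right]
          rfl
        rw [ei] at hcs
        have hmul : ‖v i‖ * ‖P.xt i (u i) - P.xt i (wstar i)‖
            ≤ ‖v i‖ * ((P.θ i)⁻¹ * (t * ‖v i‖)) :=
          mul_le_mul_of_nonneg_left hlip (norm_nonneg _)
        nlinarith [hcs, hmul]
      have hsumC := Finset.sum_le_sum (fun i (_ : i ∈ Finset.univ) => hcmp i)
      rw [Finset.sum_sub_distrib, ← Finset.sum_mul] at hsumC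
      rw [← hC] at hsumC
      nlinarith [hsumC, hS, ht, hC0]
    by_contra hneg
    push_neg at hneg
    set S := ∑ i, ip (v i) (P.xt i (wstar i)) with hS_def
    have ht : 0 < -S / (C + 1) := div_pos (by linarith) (by linarith)
    have h := hstep (-S / (C + 1)) ht
    have h2 : S * C / (C + 1) ≤ S := by
      have e : -(-S / (C + 1) * C) = S * C / (C + 1) := by ring
      linarith [e ▸ h]
    rw [div_le_iff₀ (by linarith : (0:ℝ) < C + 1)] at h2
    nlinarith [h2, hneg]
  -- consensus
  have hcons : ∀ i j : Fin n, P.xt i (wstar i) = P.xt j (wstar j) := by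
    suffices h : ∀ i j : Fin n, i ≠ j → ∀ z : Evec d,
        0 ≤ ip z (P.xt i (wstar i)) - ip z (P.xt j (wstar j)) by
      intro i j
      rcases eq_or_ne i j with rfl | hij
      · rfl
      · set a := P.xt i (wstar i)
        set b := P.xt j (wstar j)
        have e : ∀ z : Evec d, ip z a - ip z b = (inner ℝ z (a - b) : ℝ) := by
          intro z
          rw [inner_sub_right]
          rfl
        have h1 := h i j hij (a - b)
        have h2 := h i j hij (-(a - b))
        rw [e] at h1 h2
        rw [inner_neg_left] at h2
        have h3 : (inner ℝ (a - b) (a - b) : ℝ) = 0 := le_antisymm (by linarith) real_inner_self_nonneg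
        have h4 : a - b = 0 := by
          rwa [real_inner_self_eq_norm_sq, pow_eq_zero_iff (by norm_num), norm_eq_zero] at h3
        rw [sub_eq_zero] at h4
        exact h4
    intro i j hij z
    set v : ENvec n d := WithLp.toLp 2 (fun k => if k = i then z else if k = j then -z else 0) with hv_def
    have hv : v ∈ Sperp n d := by
      show (∑ k, v k) = 0
      have hterm : ∀ k : Fin n, v k = (if k = i then z else 0) + (if k = j then -z else 0) := by
        intro k
        rcases eq_or_ne k i with rfl | hki
        · have : k ≠ j := hij
          simp [hv_def, this]
        · rcases eq_or_ne k j with rfl | hkj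
          · simp [hv_def, hki]
          · simp [hv_def, hki, hkj]
      rw [Finset.sum_congr rfl (fun k _ => hterm k), Finset.sum_add_distrib,
        Finset.sum_ite_eq' Finset.univ i (fun _ => z),
        Finset.sum_ite_eq' Finset.univ j (fun _ => -z)]
      simp
    have h0 := hfo v hv
    have hterm2 : ∀ k : Fin n, ip (v k) (P.xt k (wstar k)) =
        (if k = i then ip z (P.xt k (wstar k)) else 0)
          + (if k = j then -(ip z (P.xt k (wstar k))) else 0) := by
      intro k
      rcases eq_or_ne k i with rfl | hki
      · have hkj : k ≠ j := hij
        simp [hv_def, hkj]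
      · rcases eq_or_ne k j with rfl | hkj
        · simp only [hv_def, PiLp.toLp_apply, if_neg hki, if_pos rfl, zero_add]
          show (inner ℝ (-z) (P.xt k (wstar k)) : ℝ) = -(ip z (P.xt k (wstar k)))
          rw [inner_neg_left]
          rfl
        · simp only [hv_def, PiLp.toLp_apply, if_neg hki, if_neg hkj, add_zero]
          show (inner ℝ (0 : Evec d) (P.xt k (wstar k)) : ℝ) = 0
          rw [inner_zero_left]
    rw [Finset.sum_congr rfl (fun k _ => hterm2 k), Finset.sum_add_distrib,
      Finset.sum_ite_eq' Finset.univ i, Finset.sum_ite_eq' Finset.univ j] at h0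
    simpa using h0
  -- strong duality
  have hsd : P.D wstar ≤ -P.Fstar := by
    have hn0 : 0 < n := by have := P.hn; omega
    set i0 : Fin n := ⟨0, hn0⟩ with hi0
    set xb := P.xt i0 (wstar i0) with hxb_def
    have hxb : xb ∈ ⋂ i, P.X i := Set.mem_iInter.mpr fun i => by
      rw [hxb_def, hcons i0 i]
      exact P.hxt_mem i (wstar i)
    have hDval : P.D wstar = -∑ i, P.f i xb := by
      have e1 : P.D wstar = ∑ i, (ip (wstar i) (P.xt i (wstar i)) - P.f i (P.xt i (wstar i))) := rfl
      have e2 : ∀ i : Fin n, ip (wstar i) (P.xt i (wstar i)) - P.f i (P.xt i (wstar i))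
          = ip (wstar i) xb - P.f i xb := by
        intro i
        rw [show P.xt i (wstar i) = xb from (hcons i0 i).symm]
      rw [e1, Finset.sum_congr rfl (fun i _ => e2 i), Finset.sum_sub_distrib,
        hzero wstar hws xb]
      ring
    rw [hDval]
    have hmin2 := P.hxstar_min xb hxb
    have e3 : P.Fstar = ∑ i, P.f i P.xstar := rfl
    rw [e3]
    linarith [hmin2]
  -- lower bound
  have hlower : -(‖wstar‖ * ‖projSperp xv‖) ≤ P.Fobj xv - P.Fstar := by
    have h1 : ∀ i, ip (wstar i) (xv i) - P.f i (xv i) ≤ P.dconj i (wstar i) := by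
      intro i
      have h := P.hxt_max i (wstar i) (P.xt i (w i)) (P.hxt_mem i (w i))
      exact h
    have hs := Finset.sum_le_sum (fun i (_ : i ∈ Finset.univ) => h1 i)
    rw [Finset.sum_sub_distrib] at hs
    have hDle : (∑ i, ip (wstar i) (xv i)) - P.Fobj xv ≤ P.D wstar := by
      have e1 : P.Fobj xv = ∑ i, P.f i (xv i) := rfl
      have e2 : P.D wstar = ∑ i, P.dconj i (wstar i) := rfl
      rw [e1, e2]
      exact hs
    have hlow2 : -(‖wstar‖ * ‖projSperp xv‖) ≤ (inner ℝ wstar (projSperp xv) : ℝ) := by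
      have h5 := abs_real_inner_le_norm wstar (projSperp xv)
      have h6 := neg_abs_le (inner ℝ wstar (projSperp xv) : ℝ)
      linarith
    have e := hsum_inner wstar xv
    have e2 := hproj wstar hws xv
    linarith [hDle, hsd, hlow2, e, e2]
  exact ⟨hlower, hupper⟩
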